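/- For every Boolean algebra B there exists a core regular double Stone algebra A such that B is isomorphic, as a Boolean algebra, to the center C(A) of A with the induced operations ∧, ∨ and complementation a ↦ a*. -/

import Mathlib

class DoubleStoneAlgebra (α : Type*) extends DistribLattice α, BoundedOrder α where
  pstar : α → α
  pplus : α → α
  pstar_spec : ∀ x y : α, y ⊓ x = ⊥ ↔ y ≤ pstar x
  pplus_spec : ∀ x y : α, y ⊔ x = ⊤ ↔ pplus x ≤ y
  stone : ∀ x : α, pstar x ⊔ pstar (pstar x) = ⊤
  stone_dual : ∀ x : α, pplus x ⊓ pplus (pplus x) = ⊥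

class CRDSA (α : Type*) extends DoubleStoneAlgebra α where
  regular : ∀ x y : α, pstar x = pstar y → pplus x = pplus y → x = y
  core_nonempty : ∃ k : α, pstar k = ⊥ ∧ pplus k = ⊤

open DoubleStoneAlgebra

universe u

namespace CRDSAConstruction

variable {B : Type u} [BooleanAlgebra B]

lemma ba_inf_eq_bot_iff (x y : B) : y ⊓ x = ⊥ ↔ y ≤ xᶜ := by
  rw [le_compl_iff_disjoint_right, disjoint_iff]

lemma ba_sup_eq_top_iff (x y : B) : y ⊔ x = ⊤ ↔ xᶜ ≤ y := by
  constructor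
  · intro h
    calc xᶜ = xᶜ ⊓ (y ⊔ x) := by rw [h, inf_top_eq]
    _ = xᶜ ⊓ y ⊔ xᶜ ⊓ x := inf_sup_left _ _ _
    _ ≤ y := by simp [compl_inf_eq_bot]
  · intro h
    have : xᶜ ⊔ x ≤ y ⊔ x := sup_le_sup_right h x
    rw [compl_sup_eq_top] at this
    exact top_le_iff.1 this

variable (B)

def Pairs : Type u := {p : B × B // p.1 ≤ p.2}

variable {B}

instance : Lattice (Pairs B) where
  sup x y := ⟨(x.1.1 ⊔ y.1.1, x.1.2 ⊔ y.1.2), sup_le_sup x.2 y.2⟩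
  inf x y := ⟨(x.1.1 ⊓ y.1.1, x.1.2 ⊓ y.1.2), inf_le_inf x.2 y.2⟩
  le x y := x.1.1 ≤ y.1.1 ∧ x.1.2 ≤ y.1.2
  le_refl x := ⟨le_refl _, le_refl _⟩
  le_trans x y z h h' := ⟨h.1.trans h'.1, h.2.trans h'.2⟩
  le_antisymm x y h h' := Subtype.ext (Prod.ext (le_antisymm h.1 h'.1) (le_antisymm h.2 h'.2))
  le_sup_left x y := ⟨le_sup_left, le_sup_left⟩
  le_sup_right x y := ⟨le_sup_right, le_sup_right⟩
  sup_le x y z h h' := ⟨sup_le h.1 h'.1, sup_le h.2 h'.2⟩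
  inf_le_left x y := ⟨inf_le_left, inf_le_left⟩
  inf_le_right x y := ⟨inf_le_right, inf_le_right⟩
  le_inf x y z h h' := ⟨le_inf h.1 h'.1, le_inf h.2 h'.2⟩

instance : DistribLattice (Pairs B) where
  le_sup_inf x y z :=
    ⟨(le_sup_inf : (x.1.1 ⊔ y.1.1) ⊓ (x.1.1 ⊔ z.1.1) ≤ _),
     (le_sup_inf : (x.1.2 ⊔ y.1.2) ⊓ (x.1.2 ⊔ z.1.2) ≤ _)⟩

instance : BoundedOrder (Pairs B) where
  top := ⟨(⊤, ⊤), le_refl _⟩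
  bot := ⟨(⊥, ⊥), le_refl _⟩
  le_top x := ⟨le_top, le_top⟩
  bot_le x := ⟨bot_le, bot_le⟩

lemma ext_iff' {x y : Pairs B} : x = y ↔ x.1.1 = y.1.1 ∧ x.1.2 = y.1.2 := by
  constructor
  · rintro rfl; exact ⟨rfl, rfl⟩
  · rintro ⟨h1, h2⟩; exact Subtype.ext (Prod.ext h1 h2)

lemma le_iff' {x y : Pairs B} : x ≤ y ↔ x.1.1 ≤ y.1.1 ∧ x.1.2 ≤ y.1.2 := Iff.rfl

@[simp] lemma inf_fst (x y : Pairs B) : (x ⊓ y).1.1 = x.1.1 ⊓ y.1.1 := rfl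
@[simp] lemma inf_snd (x y : Pairs B) : (x ⊓ y).1.2 = x.1.2 ⊓ y.1.2 := rfl
@[simp] lemma sup_fst (x y : Pairs B) : (x ⊔ y).1.1 = x.1.1 ⊔ y.1.1 := rfl
@[simp] lemma sup_snd (x y : Pairs B) : (x ⊔ y).1.2 = x.1.2 ⊔ y.1.2 := rfl
@[simp] lemma bot_fst : (⊥ : Pairs B).1.1 = ⊥ := rfl
@[simp] lemma bot_snd : (⊥ : Pairs B).1.2 = ⊥ := rfl
@[simp] lemma top_fst : (⊤ : Pairs B).1.1 = ⊤ := rfl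
@[simp] lemma top_snd : (⊤ : Pairs B).1.2 = ⊤ := rfl

instance : DoubleStoneAlgebra (Pairs B) where
  pstar x := ⟨(x.1.2ᶜ, x.1.2ᶜ), le_refl _⟩
  pplus x := ⟨(x.1.1ᶜ, x.1.1ᶜ), le_refl _⟩
  pstar_spec x y := by
    erw [ext_iff', le_iff']
    simp only [inf_fst, inf_snd, bot_fst, bot_snd]
    constructor
    · rintro ⟨h1, h2⟩
      have h : y.1.2 ≤ x.1.2ᶜ := (ba_inf_eq_bot_iff _ _).1 h2
      exact ⟨y.2.trans h, h⟩
    · rintro ⟨h1, h2⟩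
      refine ⟨?_, (ba_inf_eq_bot_iff _ _).2 h2⟩
      have : y.1.1 ⊓ x.1.1 ≤ y.1.2 ⊓ x.1.2 := inf_le_inf y.2 x.2
      rw [(ba_inf_eq_bot_iff _ _).2 h2] at this
      exact le_bot_iff.1 this
  pplus_spec x y := by
    erw [ext_iff', le_iff']
    simp only [sup_fst, sup_snd, top_fst, top_snd]
    constructor
    · rintro ⟨h1, h2⟩
      have h : x.1.1ᶜ ≤ y.1.1 := (ba_sup_eq_top_iff _ _).1 h1
      exact ⟨h, h.trans y.2⟩
    · rintro ⟨h1, h2⟩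
      refine ⟨(ba_sup_eq_top_iff _ _).2 h1, ?_⟩
      have : y.1.1 ⊔ x.1.1 ≤ y.1.2 ⊔ x.1.2 := sup_le_sup y.2 x.2
      rw [(ba_sup_eq_top_iff _ _).2 h1] at this
      exact top_le_iff.1 this
  stone x := by
    rw [ext_iff']
    constructor <;> exact sup_compl_eq_top
  stone_dual x := by
    rw [ext_iff']
    constructor <;> exact inf_compl_eq_bot

@[simp] lemma pstar_fst (x : Pairs B) : (pstar x).1.1 = x.1.2ᶜ := rfl
@[simp] lemma pstar_snd (x : Pairs B) : (pstar x).1.2 = x.1.2ᶜ := rfl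
@[simp] lemma pplus_fst (x : Pairs B) : (pplus x).1.1 = x.1.1ᶜ := rfl
@[simp] lemma pplus_snd (x : Pairs B) : (pplus x).1.2 = x.1.1ᶜ := rfl

instance : CRDSA (Pairs B) where
  regular x y hs hp := by
    rw [ext_iff'] at hs hp ⊢
    simp only [pstar_fst, pplus_fst] at hs hp
    exact ⟨compl_injective hp.1, compl_injective hs.1⟩
  core_nonempty := by
    refine ⟨⟨(⊥, ⊤), bot_le⟩, ?_, ?_⟩ <;> rw [ext_iff'] <;> constructor
    exacts [compl_top, compl_top, compl_bot, compl_bot]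

end CRDSAConstruction

/-- every Boolean algebra `B` is (isomorphic, as a Boolean algebra, to)
the center `C(A) = {a : a* = a⁺}` of some core regular double Stone algebra `A`:
there is a map `f : B → A` which is injective, has range exactly the center of `A`,
and preserves `⊓`, `⊔`, `⊥`, `⊤`, and carries complementation to `a ↦ a*`. -/
theorem boolean_algebra_is_center_of_CRDSA (B : Type u) [BooleanAlgebra B] :
    ∃ (A : Type u) (_ : CRDSA A) (f : B → A),
      Function.Injective f ∧
      Set.range f = {a : A | pstar a = pplus a} ∧
      (∀ x y : B, f (x ⊓ y) = f x ⊓ f y) ∧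
      (∀ x y : B, f (x ⊔ y) = f x ⊔ f y) ∧
      (∀ x : B, f xᶜ = pstar (f x)) ∧
      f ⊥ = ⊥ ∧ f ⊤ = ⊤ := by
  classical
  open CRDSAConstruction in
  refine ⟨Pairs B, inferInstance, fun b => ⟨(b, b), le_refl _⟩, ?_, ?_, ?_, ?_, ?_, ?_, ?_⟩
  · intro a b h
    exact congrArg (fun p : Pairs B => p.1.1) h
  · ext a
    simp only [Set.mem_range, Set.mem_setOf_eq]
    constructor
    · rintro ⟨b, rfl⟩
      rw [ext_iff']
      exact ⟨rfl, rfl⟩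
    · intro h
      rw [ext_iff'] at h
      simp only [pstar_fst, pplus_fst] at h
      have : a.1.2 = a.1.1 := compl_injective h.1
      exact ⟨a.1.1, by erw [ext_iff']; exact ⟨rfl, this.symm⟩⟩
  · intro x y; erw [ext_iff']; exact ⟨rfl, rfl⟩
  · intro x y; erw [ext_iff']; exact ⟨rfl, rfl⟩
  · intro x; erw [ext_iff']; exact ⟨rfl, rfl⟩
  · erw [ext_iff']; exact ⟨rfl, rfl⟩
  · erw [ext_iff']; exact ⟨rfl, rfl⟩
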